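/- arXiv:1409.8424 — 5 statements merged into one kernel-verified Lean document; each statement's English description precedes it below -/
import Mathlib

section
/- Let V be a finite type and G a simple graph on V which admits a proper 2-coloring (G is 2-colorable). Then the number of functions c : V → Fin 2 such that c u ≠ c v whenever G.Adj u v is exactly 2^{number of connected components of G}. -/
/-- a 2-colorable graph on a finite vertex set has exactly
`2 ^ (number of connected components)` proper 2-colorings. -/
theorem card_proper_two_colorings {V : Type*} [Fintype V] (G : SimpleGraph V)
    (h : ∃ c : V → Fin 2, ∀ u v : V, G.Adj u v → c u ≠ c v) :
    Nat.card {c : V → Fin 2 // ∀ u v : V, G.Adj u v → c u ≠ c v} =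
      2 ^ Nat.card G.ConnectedComponent := by
  obtain ⟨c₀, hc₀⟩ := h
  have key : ∀ (c : V → Fin 2), (∀ u v : V, G.Adj u v → c u ≠ c v) →
      ∀ u v : V, G.Adj u v → c u - c₀ u = c v - c₀ v := by
    intro c hc u v huv
    have h1 := hc u v huv
    have h2 := hc₀ u v huv
    revert h1 h2
    have : ∀ a b a' b' : Fin 2, a ≠ b → a' ≠ b' → a - a' = b - b' := by decide
    exact fun h1 h2 => this _ _ _ _ h1 h2
  let e : {c : V → Fin 2 // ∀ u v : V, G.Adj u v → c u ≠ c v} ≃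
      (G.ConnectedComponent → Fin 2) :=
    { toFun := fun c => SimpleGraph.ConnectedComponent.lift
        (fun v => c.1 v - c₀ v) (by
          intro u v p _
          clear * - key c p
          induction p with
          | nil => rfl
          | cons huv _ ih => exact (key c.1 c.2 _ _ huv).trans ih)
      invFun := fun f => ⟨fun v => c₀ v + f (G.connectedComponentMk v), by
        intro u v huv hEq
        have hcc : G.connectedComponentMk u = G.connectedComponentMk v :=
          SimpleGraph.ConnectedComponent.connectedComponentMk_eq_of_adj huv
        dsimp only at hEq
        rw [hcc] at hEq
        exact hc₀ u v huv (add_right_cancel hEq)⟩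
      left_inv := by
        intro c
        apply Subtype.ext; funext v
        show c₀ v + (c.1 v - c₀ v) = c.1 v
        abel
      right_inv := by
        intro f
        funext x
        induction x using SimpleGraph.ConnectedComponent.ind with
        | _ v =>
          show c₀ v + f (G.connectedComponentMk v) - c₀ v = f (G.connectedComponentMk v)
          abel }
  rw [Nat.card_congr e, Nat.card_fun, Nat.card_eq_fintype_card (α := Fin 2), Fintype.card_fin]
end

section
/- Let n, m, β be natural numbers, f₁, f₂ : Fin m → Fin n and e : Fin m → (Fin β → ZMod 2). Consider the system of equations η(f₁ i) + η(f₂ i) = e i for all i ∈ Fin m, in the unknown η : Fin n → (Fin β → ZMod 2). If this system has at least one solution, then the number of its solutions is exactly 2^{β · cc}, where cc is the number of connected components of the simple graph on Fin n in which u ≠ v are adjacent iff {u,v} = {f₁ i, f₂ i} for some i ∈ Fin m. -/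
/-- a satisfiable system of Xor-equations
`η (f₁ i) + η (f₂ i) = e i` over `ZMod 2`-vectors of length `β` has exactly
`2 ^ (β · cc)` solutions, where `cc` is the number of connected components of the
graph on `Fin n` whose edges are the pairs `{f₁ i, f₂ i}`. -/
theorem card_solutions_xor_system (n m β : ℕ)
    (f₁ f₂ : Fin m → Fin n) (e : Fin m → Fin β → ZMod 2)
    (h : ∃ η : Fin n → Fin β → ZMod 2, ∀ i : Fin m, η (f₁ i) + η (f₂ i) = e i) :
    Nat.card {η : Fin n → Fin β → ZMod 2 // ∀ i : Fin m, η (f₁ i) + η (f₂ i) = e i} =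
      2 ^ (β * Nat.card
        (SimpleGraph.fromRel fun u v : Fin n =>
          ∃ i : Fin m, s(u, v) = s(f₁ i, f₂ i)).ConnectedComponent) := by
  classical
  obtain ⟨η₀, hη₀⟩ := h
  set G := SimpleGraph.fromRel fun u v : Fin n =>
    ∃ i : Fin m, s(u, v) = s(f₁ i, f₂ i) with hG
  have key : ∀ a b : Fin β → ZMod 2, a + b = 0 ↔ a = b := by
    intro a b
    constructor
    · intro hab
      funext j
      have h1 : a j + b j = 0 := congrFun hab j
      have h2 : a j = -(b j) := eq_neg_of_add_eq_zero_left h1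
      rw [h2, CharTwo.neg_eq]
    · rintro rfl
      funext j
      exact CharTwo.add_self_eq_zero (a j)
  -- Step 1: translate by η₀ to homogeneous system
  have e1 : {η : Fin n → Fin β → ZMod 2 // ∀ i : Fin m, η (f₁ i) + η (f₂ i) = e i} ≃
      {η : Fin n → Fin β → ZMod 2 // ∀ i : Fin m, η (f₁ i) = η (f₂ i)} := by
    refine (Equiv.addRight η₀).subtypeEquiv fun η => ?_
    constructor
    · intro hη i
      rw [← key]
      simp only [Equiv.coe_addRight, Pi.add_apply]
      calc η (f₁ i) + η₀ (f₁ i) + (η (f₂ i) + η₀ (f₂ i))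
          = η (f₁ i) + η (f₂ i) + (η₀ (f₁ i) + η₀ (f₂ i)) := by ring
        _ = e i + e i := by rw [hη i, hη₀ i]
        _ = 0 := (key _ _).mpr rfl
    · intro hη i
      have h1 := hη i
      simp only [Equiv.coe_addRight, Pi.add_apply] at h1
      rw [← key] at h1
      have h2 : η (f₁ i) + η (f₂ i) + e i = 0 := by
        rw [← hη₀ i,
          show η (f₁ i) + η (f₂ i) + (η₀ (f₁ i) + η₀ (f₂ i))
            = η (f₁ i) + η₀ (f₁ i) + (η (f₂ i) + η₀ (f₂ i)) from by ring]
        exact h1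
      exact (key _ _).mp h2
  -- Step 2: homogeneous solutions are functions constant on components
  have hadjEq : ∀ (η : {η : Fin n → Fin β → ZMod 2 // ∀ i : Fin m, η (f₁ i) = η (f₂ i)})
      (v w : Fin n), G.Adj v w → η.1 v = η.1 w := by
    rintro η v w ⟨hne, hrel⟩
    rcases hrel with ⟨i, hi⟩ | ⟨i, hi⟩ <;>
      rcases Sym2.eq_iff.mp hi with ⟨rfl, rfl⟩ | ⟨rfl, rfl⟩ <;>
      first
      | exact η.2 i
      | exact (η.2 i).symm
  have e2 : {η : Fin n → Fin β → ZMod 2 // ∀ i : Fin m, η (f₁ i) = η (f₂ i)} ≃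
      (G.ConnectedComponent → Fin β → ZMod 2) := by
    refine
      { toFun := fun η => SimpleGraph.ConnectedComponent.lift η.1 ?_
        invFun := fun c => ⟨fun v => c (G.connectedComponentMk v), ?_⟩
        left_inv := ?_, right_inv := ?_ }
    · intro v w p _
      clear * - hadjEq η p
      induction p with
      | nil => rfl
      | cons hvw p ih => exact (hadjEq η _ _ hvw).trans ih
    · intro i
      by_cases hf : f₁ i = f₂ i
      · rw [hf]
      · show c (G.connectedComponentMk (f₁ i)) = c (G.connectedComponentMk (f₂ i))
        have hadj : G.Adj (f₁ i) (f₂ i) := by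
          rw [hG, SimpleGraph.fromRel_adj]
          exact ⟨hf, Or.inl ⟨i, rfl⟩⟩
        exact congrArg c
          (SimpleGraph.ConnectedComponent.connectedComponentMk_eq_of_adj hadj)
    · intro η
      ext v
      rfl
    · intro c
      funext x
      refine SimpleGraph.ConnectedComponent.ind (fun v => ?_) x
      rfl
  rw [Nat.card_congr (e1.trans e2)]
  have : Finite G.ConnectedComponent := Quot.finite _
  rw [Nat.card_fun, Nat.card_fun, Nat.card_eq_fintype_card (α := ZMod 2),
    Nat.card_eq_fintype_card (α := Fin β)]
  simp [ZMod.card, ← pow_mul]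
end

section
/- Let R be a vertex-transitive q × q real matrix with common row sum δ = Σ_j R 0 j. Then the dimension of the eigenspace {v : Fin q → ℝ | R.mulVec v = δ • v} equals the number of connected components of the simple graph on Fin q in which i ≠ j are adjacent iff R i j ≠ 0. -/
namespace Inhomog

noncomputable section
/-- A matrix is vertex-transitive if it is symmetric, has nonnegative entries,
and its automorphism group acts transitively on indices. -/
def IsVertexTransitive {q : ℕ} (R : Matrix (Fin q) (Fin q) ℝ) : Prop :=
  R.IsSymm ∧ (∀ i j, 0 ≤ R i j) ∧
    ∀ i j : Fin q, ∃ π : Equiv.Perm (Fin q), π i = j ∧ ∀ a b, R (π a) (π b) = R a b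

/-- the dimension of the `δ`-eigenspace of a vertex-transitive
matrix equals the number of connected components of its support graph. -/
theorem eigenspace_dim_eq_card_components (q : ℕ) (hq : 0 < q)
    (R : Matrix (Fin q) (Fin q) ℝ) (hR : IsVertexTransitive R) :
    Module.finrank ℝ
        ↥(Module.End.eigenspace (Matrix.toLin' R) (∑ j, R ⟨0, hq⟩ j)) =
      Nat.card (SimpleGraph.fromRel fun i j : Fin q => R i j ≠ 0).ConnectedComponent := by
  classical
  obtain ⟨hsymm, hnn, htrans⟩ := hR
  set δ : ℝ := ∑ j, R ⟨0, hq⟩ j with hδ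
  set G : SimpleGraph (Fin q) := SimpleGraph.fromRel fun i j : Fin q => R i j ≠ 0 with hG
  -- all row sums equal δ
  have hrow : ∀ i, ∑ j, R i j = δ := by
    intro i
    obtain ⟨π, hπ0, hπ⟩ := htrans ⟨0, hq⟩ i
    calc ∑ j, R i j = ∑ j, R (π ⟨0, hq⟩) (π j) := by
          rw [hπ0]; exact (Equiv.sum_comp π fun j => R i j).symm
      _ = ∑ j, R ⟨0, hq⟩ j := by simp only [hπ]
  -- key: eigenvectors are constant across nonzero entries
  have hkey : ∀ v : Fin q → ℝ, R.mulVec v = δ • v →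
      ∀ i j, R i j ≠ 0 → v i = v j := by
    intro v hv i j hij
    have hsum : ∑ p : Fin q × Fin q, R p.1 p.2 * (v p.1 - v p.2) ^ 2 = 0 := by
      have expand : ∀ p : Fin q × Fin q, R p.1 p.2 * (v p.1 - v p.2) ^ 2 =
          R p.1 p.2 * (v p.1) ^ 2 - 2 * (R p.1 p.2 * v p.1 * v p.2)
            + R p.1 p.2 * (v p.2) ^ 2 := by intro p; ring
      have hA : ∑ p : Fin q × Fin q, R p.1 p.2 * (v p.1) ^ 2 = δ * ∑ i, (v i) ^ 2 := by
        rw [Fintype.sum_prod_type, Finset.mul_sum]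
        refine Finset.sum_congr rfl fun i _ => ?_
        show ∑ y, R i y * v i ^ 2 = δ * v i ^ 2
        rw [← Finset.sum_mul, hrow i]
      have hC : ∑ p : Fin q × Fin q, R p.1 p.2 * (v p.2) ^ 2 = δ * ∑ i, (v i) ^ 2 := by
        rw [Fintype.sum_prod_type_right, Finset.mul_sum]
        refine Finset.sum_congr rfl fun j _ => ?_
        show ∑ x, R x j * v j ^ 2 = δ * v j ^ 2
        rw [← Finset.sum_mul]
        congr 1
        calc ∑ i, R i j = ∑ i, R j i := Finset.sum_congr rfl fun i _ => hsymm.apply j i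
          _ = δ := hrow j
      have hB : ∑ p : Fin q × Fin q, R p.1 p.2 * v p.1 * v p.2 = δ * ∑ i, (v i) ^ 2 := by
        rw [Fintype.sum_prod_type, Finset.mul_sum]
        refine Finset.sum_congr rfl fun i _ => ?_
        have hmv : ∑ j, R i j * v j = δ * v i := by
          have := congrFun hv i
          simpa [Matrix.mulVec, dotProduct] using this
        calc ∑ j, R i j * v i * v j = v i * ∑ j, R i j * v j := by
              rw [Finset.mul_sum]; exact Finset.sum_congr rfl fun j _ => by ring
          _ = v i * (δ * v i) := by rw [hmv]
          _ = δ * (v i) ^ 2 := by ring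
      calc ∑ p : Fin q × Fin q, R p.1 p.2 * (v p.1 - v p.2) ^ 2
          = (∑ p : Fin q × Fin q, R p.1 p.2 * (v p.1) ^ 2)
            - 2 * (∑ p : Fin q × Fin q, R p.1 p.2 * v p.1 * v p.2)
            + ∑ p : Fin q × Fin q, R p.1 p.2 * (v p.2) ^ 2 := by
            rw [Finset.sum_congr rfl fun p _ => expand p, Finset.sum_add_distrib,
              Finset.sum_sub_distrib, ← Finset.mul_sum]
        _ = 0 := by rw [hA, hB, hC]; ring
    have hterm : R i j * (v i - v j) ^ 2 = 0 := by
      have := (Finset.sum_eq_zero_iff_of_nonneg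
        (fun p _ => mul_nonneg (hnn p.1 p.2) (sq_nonneg _))).mp hsum (i, j)
        (Finset.mem_univ _)
      exact this
    have : (v i - v j) ^ 2 = 0 := by
      rcases mul_eq_zero.mp hterm with h | h
      · exact absurd h hij
      · exact h
    have := pow_eq_zero_iff (n := 2) (by norm_num) |>.mp this
    linarith [sub_eq_zero.mp this]
  -- eigenvectors are constant on connected components
  have hreach : ∀ v : Fin q → ℝ, R.mulVec v = δ • v →
      ∀ i j : Fin q, G.Reachable i j → v i = v j := by
    intro v hv i j h
    obtain ⟨w⟩ := h
    induction w with
    | nil => rfl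
    | cons hA _ ih =>
        refine Eq.trans ?_ ih
        rw [hG, SimpleGraph.fromRel_adj] at hA
        rcases hA.2 with h' | h'
        · exact hkey v hv _ _ h'
        · exact (hkey v hv _ _ h').symm
  -- the candidate map
  have hmem : ∀ f : G.ConnectedComponent → ℝ,
      (fun i => f (G.connectedComponentMk i)) ∈
        Module.End.eigenspace (Matrix.toLin' R) δ := by
    intro f
    rw [Module.End.mem_eigenspace_iff]
    ext i
    have : ∀ j, R i j * f (G.connectedComponentMk j) = R i j * f (G.connectedComponentMk i) := by
      intro j
      by_cases h0 : R i j = 0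
      · rw [h0]; ring
      · by_cases hij : i = j
        · rw [hij]
        · have hadj : G.Adj i j := by
            rw [hG, SimpleGraph.fromRel_adj]; exact ⟨hij, Or.inl h0⟩
          rw [SimpleGraph.ConnectedComponent.sound hadj.reachable]
    calc (Matrix.toLin' R fun i => f (G.connectedComponentMk i)) i
        = ∑ j, R i j * f (G.connectedComponentMk j) := by
          rw [Matrix.toLin'_apply]; simp [Matrix.mulVec, dotProduct]
      _ = ∑ j, R i j * f (G.connectedComponentMk i) := Finset.sum_congr rfl fun j _ => this j
      _ = δ * f (G.connectedComponentMk i) := by rw [← Finset.sum_mul, hrow i]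
      _ = (δ • fun i => f (G.connectedComponentMk i)) i := rfl
  let Φ : (G.ConnectedComponent → ℝ) →ₗ[ℝ]
      ↥(Module.End.eigenspace (Matrix.toLin' R) δ) :=
    { toFun := fun f => ⟨fun i => f (G.connectedComponentMk i), hmem f⟩
      map_add' := fun f g => rfl
      map_smul' := fun c f => rfl }
  have hbij : Function.Bijective Φ := by
    constructor
    · intro f g hfg
      ext c
      obtain ⟨i, rfl⟩ := Quot.exists_rep c
      exact congrFun (congrArg Subtype.val hfg) i
    · rintro ⟨v, hv⟩
      rw [Module.End.mem_eigenspace_iff, Matrix.toLin'_apply] at hv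
      refine ⟨Quot.lift v (fun a b h => hreach v hv a b h), ?_⟩
      ext i
      rfl
  have := (LinearEquiv.ofBijective Φ hbij).symm.finrank_eq
  rw [this, Module.finrank_fintype_fun_eq_card, Nat.card_eq_fintype_card]

end

end Inhomog
end

section
/- Let n, m ∈ ℕ and let E be a multiset of cardinality m over Sym2 (Fin n). Then the number of functions f : Fin m → Fin n × Fin n such that the multiset image of i ↦ s((f i).1, (f i).2) equals E is exactly 2^m · m! · κ(E) (an equality of rational numbers). -/
namespace Inhomog

noncomputable section
/-- Compensation factor of a multigraph given as a multiset of unordered pairs. -/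
def kappa {n : ℕ} (E : Multiset (Sym2 (Fin n))) : ℚ :=
  (∏ v : Fin n, ((2 : ℚ) ^ (E.count s(v, v)))⁻¹) *
    ∏ e ∈ E.toFinset, ((E.count e).factorial : ℚ)⁻¹

variable {n : ℕ}

lemma prod_fact_univ (E : Multiset (Sym2 (Fin n))) :
    ∏ e ∈ E.toFinset, ((E.count e).factorial : ℚ)⁻¹ =
      ∏ e : Sym2 (Fin n), ((E.count e).factorial : ℚ)⁻¹ := by
  apply Finset.prod_subset (Finset.subset_univ _)
  intro x _ hx
  rw [Multiset.count_eq_zero_of_notMem (by simpa using hx)]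
  simp

lemma kappa_eq (E : Multiset (Sym2 (Fin n))) :
    kappa E = (∏ v : Fin n, ((2 : ℚ) ^ (E.count s(v, v)))⁻¹) *
      ∏ e : Sym2 (Fin n), ((E.count e).factorial : ℚ)⁻¹ := by
  rw [kappa, prod_fact_univ]

lemma kappa_cons (e : Sym2 (Fin n)) (E : Multiset (Sym2 (Fin n))) :
    kappa (e ::ₘ E) * ((E.count e : ℚ) + 1) * (if e.IsDiag then (2:ℚ) else 1) = kappa E := by
  rw [kappa_eq, kappa_eq]
  have hA : (∏ v : Fin n, ((2 : ℚ) ^ ((e ::ₘ E).count s(v, v)))⁻¹) =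
      (∏ v : Fin n, ((2 : ℚ) ^ (E.count s(v, v)))⁻¹) *
        (if e.IsDiag then (2:ℚ)⁻¹ else 1) := by
    have : ∀ v : Fin n, ((2 : ℚ) ^ ((e ::ₘ E).count s(v, v)))⁻¹ =
        ((2 : ℚ) ^ (E.count s(v, v)))⁻¹ * (if s(v,v) = e then (2:ℚ)⁻¹ else 1) := by
      intro v
      rw [Multiset.count_cons, pow_add, mul_inv]
      congr 1
      split_ifs <;> simp
    rw [Finset.prod_congr rfl fun v _ => this v, Finset.prod_mul_distrib]
    congr 1
    by_cases hd : e.IsDiag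
    · obtain ⟨a, rfl⟩ := (⟨_, Sym2.diag_diagElem hd⟩ : ∃ a, Sym2.diag a = e)
      have : ∀ v : Fin n, (s(v,v) = Sym2.diag a) ↔ v = a := by
        intro v
        rw [Sym2.diag, Sym2.eq_iff]
        constructor
        · rintro (⟨rfl, -⟩ | ⟨rfl, -⟩) <;> rfl
        · rintro rfl; simp
      simp only [this]
      rw [Finset.prod_ite_eq' Finset.univ a (fun _ => (2:ℚ)⁻¹)]
      simp [hd]
    · have : ∀ v : Fin n, ¬ (s(v,v) = e) := by
        rintro v rfl
        exact hd (Sym2.mk_isDiag_iff.mpr rfl)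
      simp [this, hd]
  have hB : (∏ x : Sym2 (Fin n), (((e ::ₘ E).count x).factorial : ℚ)⁻¹) =
      (∏ x : Sym2 (Fin n), ((E.count x).factorial : ℚ)⁻¹) * ((E.count e : ℚ) + 1)⁻¹ := by
    rw [← Finset.mul_prod_erase Finset.univ _ (Finset.mem_univ e),
        ← Finset.mul_prod_erase Finset.univ (fun x => ((E.count x).factorial : ℚ)⁻¹)
          (Finset.mem_univ e)]
    have h1 : ∀ x ∈ Finset.univ.erase e, (((e ::ₘ E).count x).factorial : ℚ)⁻¹ =
        ((E.count x).factorial : ℚ)⁻¹ := by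
      intro x hx
      rw [Multiset.count_cons_of_ne (Finset.mem_erase.mp hx).1]
    rw [Finset.prod_congr rfl h1, Multiset.count_cons_self, Nat.factorial_succ]
    push_cast
    rw [mul_inv]
    ring
  rw [hA, hB]
  have hne : ((E.count e : ℚ) + 1) ≠ 0 := by positivity
  split_ifs <;> field_simp <;> ring

lemma kappa_erase {e : Sym2 (Fin n)} {E : Multiset (Sym2 (Fin n))} (he : e ∈ E) :
    kappa E * (E.count e : ℚ) * (if e.IsDiag then (2:ℚ) else 1) = kappa (E.erase e) := by
  have hpos := Multiset.count_pos.mpr he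
  have h2 : E.count e = (E.erase e).count e + 1 := by
    rw [Multiset.count_erase_self]; omega
  rw [h2]
  push_cast
  have h := kappa_cons e (E.erase e)
  rw [Multiset.cons_erase he] at h
  exact h

lemma map_univ_succ {m : ℕ} {β : Type*} (h : Fin (m+1) → β) :
    Multiset.map h Finset.univ.val =
      h 0 ::ₘ Multiset.map (fun i : Fin m => h i.succ) Finset.univ.val := by
  rw [Fin.univ_succ, Finset.cons_val, Multiset.map_cons, Finset.map_val, Multiset.map_map]
  rfl

lemma cons_eq_iff {β : Type*} [DecidableEq β] {b : β} {t E : Multiset β} :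
    b ::ₘ t = E ↔ b ∈ E ∧ t = E.erase b := by
  constructor
  · rintro rfl
    exact ⟨Multiset.mem_cons_self _ _, (Multiset.erase_cons_head _ _).symm⟩
  · rintro ⟨hb, rfl⟩
    exact Multiset.cons_erase hb

lemma card_filter_pi_succ {α : Type*} [Fintype α] [DecidableEq α] {m : ℕ}
    (P : (Fin (m+1) → α) → Prop) [DecidablePred P] :
    (Finset.univ.filter P).card =
      ∑ a : α, (Finset.univ.filter fun g : Fin m → α => P (Fin.cons a g)).card := by
  classical
  have hequiv : {f : Fin (m+1) → α // P f} ≃ Σ a : α, {g : Fin m → α // P (Fin.cons a g)} :=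
    { toFun := fun f => ⟨f.1 0, Fin.tail f.1, by rw [Fin.cons_self_tail]; exact f.2⟩
      invFun := fun x => ⟨Fin.cons x.1 x.2.1, x.2.2⟩
      left_inv := fun f => Subtype.ext (Fin.cons_self_tail f.1)
      right_inv := fun x => rfl }
  calc (Finset.univ.filter P).card = Fintype.card {f : Fin (m+1) → α // P f} :=
        (Fintype.card_subtype P).symm
    _ = Fintype.card (Σ a : α, {g : Fin m → α // P (Fin.cons a g)}) := Fintype.card_congr hequiv
    _ = ∑ a : α, Fintype.card {g : Fin m → α // P (Fin.cons a g)} := Fintype.card_sigma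
    _ = _ := by simp [Fintype.card_subtype]

lemma card_succ (m : ℕ) (E : Multiset (Sym2 (Fin n))) :
    ((Finset.univ.filter fun f : Fin (m+1) → Fin n × Fin n =>
        Multiset.map (fun i => s((f i).1, (f i).2)) Finset.univ.val = E).card)
    = ∑ a : Fin n × Fin n, if s(a.1, a.2) ∈ E then
        (Finset.univ.filter fun g : Fin m → Fin n × Fin n =>
          Multiset.map (fun i => s((g i).1, (g i).2)) Finset.univ.val
            = E.erase s(a.1, a.2)).card
      else 0 := by
  classical
  rw [card_filter_pi_succ]
  refine Finset.sum_congr rfl fun a _ => ?_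
  have hiff : ∀ g : Fin m → Fin n × Fin n,
      (Multiset.map (fun i => s(((Fin.cons a g : Fin (m+1) → Fin n × Fin n) i).1,
          ((Fin.cons a g : Fin (m+1) → Fin n × Fin n) i).2)) Finset.univ.val = E)
      ↔ (s(a.1, a.2) ∈ E ∧
          Multiset.map (fun i => s((g i).1, (g i).2)) Finset.univ.val = E.erase s(a.1, a.2)) := by
    intro g
    rw [map_univ_succ (fun i => s(((Fin.cons a g : Fin (m+1) → Fin n × Fin n) i).1,
        ((Fin.cons a g : Fin (m+1) → Fin n × Fin n) i).2))]
    simp only [Fin.cons_zero, Fin.cons_succ]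
    exact cons_eq_iff
  rw [Finset.filter_congr (fun g _ => hiff g)]
  by_cases hmem : s(a.1, a.2) ∈ E
  · simp [hmem]
  · simp [hmem]

lemma sum_ite_two (e : Sym2 (Fin n)) :
    ∑ a : Fin n × Fin n,
        (if s(a.1, a.2) = e then (if e.IsDiag then (2:ℚ) else 1) else 0) = 2 := by
  induction e using Sym2.ind with
  | _ u v =>
    by_cases huv : u = v
    · subst huv
      have hd : Sym2.IsDiag s(u, u) := Sym2.mk_isDiag_iff.mpr rfl
      simp only [hd, if_true]
      have hcond : ∀ a : Fin n × Fin n, (s(a.1, a.2) = s(u, u)) ↔ a = (u, u) := by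
        intro a; rw [Sym2.eq_iff]
        constructor
        · rintro (⟨h1, h2⟩ | ⟨h1, h2⟩) <;> exact Prod.ext h1 h2
        · rintro rfl; simp
      simp only [hcond]
      rw [Finset.sum_ite_eq' Finset.univ ((u, u) : Fin n × Fin n) (fun _ => (2:ℚ))]
      simp
    · have hd : ¬ Sym2.IsDiag s(u, v) := by rw [Sym2.mk_isDiag_iff]; exact huv
      simp only [hd, if_false]
      have hcond : ∀ a : Fin n × Fin n,
          (s(a.1, a.2) = s(u, v)) ↔ (a = (u, v) ∨ a = (v, u)) := by
        intro a; rw [Sym2.eq_iff]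
        constructor
        · rintro (⟨h1, h2⟩ | ⟨h1, h2⟩)
          exacts [Or.inl (Prod.ext h1 h2), Or.inr (Prod.ext h1 h2)]
        · rintro (rfl | rfl) <;> simp
      simp only [hcond]
      have hsplit : ∀ a : Fin n × Fin n,
          (if (a = (u, v) ∨ a = (v, u)) then (1:ℚ) else 0)
          = (if a = (u, v) then (1:ℚ) else 0) + (if a = (v, u) then (1:ℚ) else 0) := by
        intro a
        by_cases h1 : a = (u, v) <;> by_cases h2 : a = (v, u) <;> simp_all
      rw [Finset.sum_congr rfl fun a _ => hsplit a, Finset.sum_add_distrib,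
        Finset.sum_ite_eq' Finset.univ ((u, v) : Fin n × Fin n) (fun _ => (1:ℚ)),
        Finset.sum_ite_eq' Finset.univ ((v, u) : Fin n × Fin n) (fun _ => (1:ℚ))]
      norm_num

lemma sum_count_w (E : Multiset (Sym2 (Fin n))) :
    ∑ a : Fin n × Fin n,
        (E.count s(a.1, a.2) : ℚ) * (if (s(a.1, a.2)).IsDiag then (2:ℚ) else 1)
      = 2 * Multiset.card E := by
  induction E using Multiset.induction_on with
  | empty => simp
  | cons e E ih =>
    have hterm : ∀ a : Fin n × Fin n,
        ((e ::ₘ E).count s(a.1, a.2) : ℚ) * (if (s(a.1, a.2)).IsDiag then (2:ℚ) else 1)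
        = (E.count s(a.1, a.2) : ℚ) * (if (s(a.1, a.2)).IsDiag then (2:ℚ) else 1)
          + (if s(a.1, a.2) = e then (if e.IsDiag then (2:ℚ) else 1) else 0) := by
      intro a
      rw [Multiset.count_cons]
      push_cast
      by_cases h : s(a.1, a.2) = e
      · simp only [h, if_true]; ring
      · simp [h]
    rw [Finset.sum_congr rfl fun a _ => hterm a, Finset.sum_add_distrib, ih, sum_ite_two]
    rw [Multiset.card_cons]
    push_cast
    ring

/-- a multigraph with `m` edges corresponds to exactly
`2^m · m! · κ(E)` ordered sequences of `m` ordered couples of vertices. -/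
theorem card_sequences_eq (n m : ℕ) (E : Multiset (Sym2 (Fin n)))
    (hE : Multiset.card E = m) :
    ((Finset.univ.filter fun f : Fin m → Fin n × Fin n =>
        Multiset.map (fun i => s((f i).1, (f i).2)) Finset.univ.val = E).card : ℚ) =
      2 ^ m * (m.factorial : ℚ) * kappa E := by
  induction m generalizing E with
  | zero =>
    rw [Multiset.card_eq_zero] at hE
    subst hE
    simp [kappa]
  | succ m ih =>
    rw [card_succ]
    push_cast
    have key : ∀ a : Fin n × Fin n,
        (if s(a.1, a.2) ∈ E then
          ((Finset.univ.filter fun g : Fin m → Fin n × Fin n =>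
            Multiset.map (fun i => s((g i).1, (g i).2)) Finset.univ.val
              = E.erase s(a.1, a.2)).card : ℚ)
        else 0)
        = 2 ^ m * (m.factorial : ℚ) * kappa E *
            ((E.count s(a.1, a.2) : ℚ) * (if (s(a.1, a.2)).IsDiag then (2:ℚ) else 1)) := by
      intro a
      by_cases hmem : s(a.1, a.2) ∈ E
      · rw [if_pos hmem, ih _ (by rw [Multiset.card_erase_of_mem hmem, hE]; rfl),
          ← kappa_erase hmem]
        ring
      · rw [if_neg hmem, Multiset.count_eq_zero_of_notMem hmem]
        simp
    rw [Finset.sum_congr rfl fun a _ => key a, ← Finset.mul_sum, sum_count_w, hE]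
    rw [Nat.factorial_succ]
    push_cast
    ring

end

end Inhomog
end

section
/- Let R be a symmetric q × q real matrix with nonnegative entries and take σ = 1. Then for all n, m ∈ ℕ, g_{R,1}(n,m) = (1/(2^m · m!)) · Σ_{n⃗} (n! / ∏_{i} n⃗_i!) · (Σ_{i,j} n⃗_i · R i j · n⃗_j)^m, where the sum ranges over all vectors n⃗ : Fin q → ℕ with Σ_i n⃗_i = n. -/
namespace Inhomog

noncomputable section

/-- Support graph of a multigraph: `u ≠ v` adjacent iff `s(u,v) ∈ E`. -/
def supportGraph {n : ℕ} (E : Multiset (Sym2 (Fin n))) : SimpleGraph (Fin n) :=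
  SimpleGraph.fromRel fun u v => s(u, v) ∈ E

/-- Number of connected components of the support graph. -/
def cc {n : ℕ} (E : Multiset (Sym2 (Fin n))) : ℕ :=
  Nat.card (supportGraph E).ConnectedComponent

/-- Weight of a colored multigraph. -/
def weight {q n : ℕ} (R : Matrix (Fin q) (Fin q) ℝ) (σ : ℝ)
    (E : Multiset (Sym2 (Fin n))) (c : Fin n → Fin q) : ℝ :=
  (kappa E : ℝ) * σ ^ cc E *
    ∏ e ∈ E.toFinset, (R (c e.inf) (c e.sup)) ^ (E.count e)

/-- Total weight of `(R,σ)`-multigraphs with `n` vertices and `m` edges. -/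
def g {q : ℕ} (R : Matrix (Fin q) (Fin q) ℝ) (σ : ℝ) (n m : ℕ) : ℝ :=
  ∑ E : Sym (Sym2 (Fin n)) m, ∑ c : Fin n → Fin q, weight R σ E.1 c

open Finset

lemma card_colorings (q n : ℕ) (v : Fin q → ℕ) (hv : ∑ i, v i = n) :
    (Finset.univ.filter fun c : Fin n → Fin q =>
      (fun i => (Finset.univ.filter fun u => c u = i).card) = v).card
      = Nat.multinomial Finset.univ v := by
  classical
  set N : (Fin n → Fin q) → (Fin q → ℕ) :=
    fun c i => (Finset.univ.filter fun u => c u = i).card with hN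
  have key : (∑ i : Fin q, (MvPolynomial.X i : MvPolynomial (Fin q) ℕ)) ^ n
      = ∑ c : Fin n → Fin q, ∏ i : Fin q,
          (MvPolynomial.X i : MvPolynomial (Fin q) ℕ) ^ (N c i) := by
    calc (∑ i : Fin q, (MvPolynomial.X i : MvPolynomial (Fin q) ℕ)) ^ n
        = ∏ _u : Fin n, ∑ i : Fin q, (MvPolynomial.X i : MvPolynomial (Fin q) ℕ) := by
          rw [Finset.prod_const, Finset.card_univ, Fintype.card_fin]
      _ = ∑ c ∈ Fintype.piFinset (fun _ : Fin n => (univ : Finset (Fin q))),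
            ∏ u : Fin n, MvPolynomial.X (c u) := Finset.prod_univ_sum _ _
      _ = ∑ c : Fin n → Fin q, ∏ i : Fin q, MvPolynomial.X i ^ (N c i) := by
          rw [Fintype.piFinset_univ]
          refine Finset.sum_congr rfl fun c _ => ?_
          rw [← Finset.prod_fiberwise_of_maps_to (fun u _ => Finset.mem_univ (c u))
            (fun u => (MvPolynomial.X (c u) : MvPolynomial (Fin q) ℕ))]
          refine Finset.prod_congr rfl fun i _ => ?_
          rw [Finset.prod_congr rfl (fun u hu => by rw [(Finset.mem_filter.1 hu).2]),
            Finset.prod_const]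
  have key2 : (∑ i : Fin q, (MvPolynomial.X i : MvPolynomial (Fin q) ℕ)) ^ n
      = ∑ k ∈ piAntidiag (univ : Finset (Fin q)) n,
          (Nat.multinomial univ k : MvPolynomial (Fin q) ℕ) * ∏ i : Fin q, MvPolynomial.X i ^ k i :=
    Finset.sum_pow_eq_sum_piAntidiag _ _ _
  set T : (Fin q → ℕ) → (Fin q →₀ ℕ) := fun w => Finsupp.equivFunOnFinite.symm w with hT
  have hmono : ∀ w : Fin q → ℕ, (∏ i : Fin q, (MvPolynomial.X i : MvPolynomial (Fin q) ℕ) ^ w i)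
      = MvPolynomial.monomial (T w) 1 := by
    intro w
    rw [← MvPolynomial.prod_X_pow_eq_monomial]
    refine (Finset.prod_subset (Finset.subset_univ _) fun i _ hi => ?_).symm.trans
      (Finset.prod_congr rfl fun i _ => by simp [hT])
    have : (T w) i = 0 := Finsupp.notMem_support_iff.1 hi
    simp only [hT, Finsupp.coe_equivFunOnFinite_symm] at this
    simp [this]
  have hcoeff := congrArg (MvPolynomial.coeff (T v)) (key.symm.trans key2)
  rw [MvPolynomial.coeff_sum, MvPolynomial.coeff_sum] at hcoeff
  have hTinj : Function.Injective T := Finsupp.equivFunOnFinite.symm.injective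
  have hL : ∑ c : Fin n → Fin q, MvPolynomial.coeff (T v)
      (∏ i : Fin q, (MvPolynomial.X i : MvPolynomial (Fin q) ℕ) ^ (N c i))
      = (Finset.univ.filter fun c : Fin n → Fin q => N c = v).card := by
    rw [Finset.card_filter]
    refine Finset.sum_congr rfl fun c _ => ?_
    rw [hmono, MvPolynomial.coeff_monomial]
    by_cases h : N c = v
    · simp [h]
    · rw [if_neg (fun hh => h (hTinj hh)), if_neg h]
  have hR : ∑ k ∈ piAntidiag (univ : Finset (Fin q)) n, MvPolynomial.coeff (T v)
      ((Nat.multinomial univ k : MvPolynomial (Fin q) ℕ) * ∏ i : Fin q, MvPolynomial.X i ^ k i)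
      = Nat.multinomial univ v := by
    have hv' : v ∈ piAntidiag (univ : Finset (Fin q)) n := by
      rw [Finset.mem_piAntidiag]; exact ⟨hv, fun i _ => Finset.mem_univ i⟩
    rw [Finset.sum_eq_single_of_mem v hv']
    · rw [hmono, ← MvPolynomial.C_eq_coe_nat, MvPolynomial.coeff_C_mul,
        MvPolynomial.coeff_monomial, if_pos rfl, mul_one, Nat.cast_id]
    · intro k _ hk
      rw [hmono, ← MvPolynomial.C_eq_coe_nat, MvPolynomial.coeff_C_mul,
        MvPolynomial.coeff_monomial, if_neg (fun hh => hk (hTinj hh)), mul_zero]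
  rw [hL, hR] at hcoeff
  simpa [hN] using hcoeff

lemma infsup (q n : ℕ) (R : Matrix (Fin q) (Fin q) ℝ) (hsymm : R.IsSymm)
    (c : Fin n → Fin q) (a b : Fin n) : R (c (a ⊓ b)) (c (a ⊔ b)) = R (c a) (c b) := by
  rcases le_total a b with h | h
  · rw [inf_eq_left.2 h, sup_eq_right.2 h]
  · rw [inf_eq_right.2 h, sup_eq_left.2 h, hsymm.apply]

lemma sum_pairs (q n : ℕ) (R : Matrix (Fin q) (Fin q) ℝ) (hsymm : R.IsSymm)
    (c : Fin n → Fin q) :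
    ∑ e : Sym2 (Fin n), (if e.IsDiag then (1:ℝ) else 2) * R (c e.inf) (c e.sup)
      = ∑ u : Fin n, ∑ v : Fin n, R (c u) (c v) := by
  classical
  have hprod : ∑ u : Fin n, ∑ v : Fin n, R (c u) (c v)
      = ∑ p : Fin n × Fin n, R (c p.1) (c p.2) :=
    (Fintype.sum_prod_type (f := fun p : Fin n × Fin n => R (c p.1) (c p.2))).symm
  rw [hprod]
  rw [← Finset.sum_fiberwise_of_maps_to (fun p _ => Finset.mem_univ (Sym2.mk p.1 p.2))
    (fun p : Fin n × Fin n => R (c p.1) (c p.2))]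
  refine Finset.sum_congr rfl fun e _ => ?_
  induction e using Sym2.ind with
  | _ a b =>
    by_cases hab : a = b
    · subst hab
      have hf : Finset.univ.filter (fun p : Fin n × Fin n => Sym2.mk p.1 p.2 = s(a, a)) = {(a, a)} := by
        ext ⟨x, y⟩
        simp only [Finset.mem_filter, Finset.mem_univ, true_and, Finset.mem_singleton,
          Sym2.eq_iff, Prod.mk.injEq]
        tauto
      rw [hf, Finset.sum_singleton]
      simp [infsup q n R hsymm c]
    · have hf : Finset.univ.filter (fun p : Fin n × Fin n => Sym2.mk p.1 p.2 = s(a, b))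
          = {(a, b), (b, a)} := by
        ext ⟨x, y⟩
        simp only [Finset.mem_filter, Finset.mem_univ, true_and, Finset.mem_insert,
          Finset.mem_singleton, Sym2.eq_iff, Prod.mk.injEq]
      rw [hf, Finset.sum_pair (by simp [Prod.ext_iff, hab])]
      have hd : ¬ (s(a, b)).IsDiag := by simpa [Sym2.mk_isDiag_iff] using hab
      rw [if_neg hd]
      have h1 : R (c b) (c a) = R (c a) (c b) := hsymm.apply (c a) (c b)
      simp only [Sym2.inf_mk, Sym2.sup_mk, infsup q n R hsymm c]
      ring_nf
      rw [h1]
      ring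

lemma diag_count (n : ℕ) (E : Multiset (Sym2 (Fin n))) :
    ∑ v : Fin n, E.count s(v, v)
      = ∑ e ∈ E.toFinset.filter (fun e => e.IsDiag), E.count e := by
  classical
  have himg : ∑ v : Fin n, E.count s(v, v)
      = ∑ e ∈ (univ : Finset (Fin n)).image (fun v => s(v, v)), E.count e := by
    rw [Finset.sum_image]
    intro x _ y _ h
    simpa using (Sym2.eq_iff.1 h).elim (fun h => h.1) (fun h => h.1)
  rw [himg]
  refine (Finset.sum_subset ?_ ?_).symm
  · intro e he
    rw [Finset.mem_filter] at he
    obtain ⟨he1, he2⟩ := he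
    induction e using Sym2.ind with
    | _ x y =>
      obtain rfl : x = y := Sym2.mk_isDiag_iff.1 he2
      exact Finset.mem_image.2 ⟨x, Finset.mem_univ x, rfl⟩
  · intro e he hne
    rcases Finset.mem_image.1 he with ⟨v, _, rfl⟩
    rw [Multiset.count_eq_zero]
    intro hmem
    exact hne (Finset.mem_filter.2 ⟨Multiset.mem_toFinset.2 hmem, by simp⟩)

lemma multiset_multinomial_spec {α : Type*} [DecidableEq α] (s : Multiset α) :
    (∏ e ∈ s.toFinset, (s.count e).factorial) * s.countPerms = (Multiset.card s).factorial := by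
  have h1 : s.countPerms = Nat.multinomial s.toFinset s.count := by
    rw [Multiset.countPerms, Finsupp.multinomial_eq, Multiset.toFinsupp_support]
    exact Nat.multinomial_congr fun e _ => Multiset.toFinsupp_apply s e
  rw [h1, Nat.multinomial_spec, Multiset.toFinset_sum_count_eq]

lemma sum_sym (q n m : ℕ) (R : Matrix (Fin q) (Fin q) ℝ) (c : Fin n → Fin q) :
    ∑ E : Sym (Sym2 (Fin n)) m,
        ((kappa E.1 : ℚ) : ℝ) * ∏ e ∈ E.1.toFinset, R (c e.inf) (c e.sup) ^ E.1.count e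
      = ((2:ℝ) ^ m * m.factorial)⁻¹ *
        (∑ e : Sym2 (Fin n), (if e.IsDiag then (1:ℝ) else 2) * R (c e.inf) (c e.sup)) ^ m := by
  classical
  set a : Sym2 (Fin n) → ℝ :=
    fun e => (if e.IsDiag then (1:ℝ) else 2) * R (c e.inf) (c e.sup) with ha
  have hpow : (∑ e ∈ (univ : Finset (Sym2 (Fin n))), a e) ^ m
      = ∑ k ∈ (univ : Finset (Sym2 (Fin n))).sym m,
          (k.val.countPerms : ℝ) * (k.val.map a).prod := Finset.sum_pow a m
  rw [show (∑ e : Sym2 (Fin n), a e) = ∑ e ∈ (univ : Finset (Sym2 (Fin n))), a e from rfl,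
    hpow, Finset.sym_univ, Finset.mul_sum]
  refine Finset.sum_congr rfl fun E _ => ?_
  set s := E.1 with hs
  have hcard : Multiset.card s = m := E.2
  set A := ∑ e ∈ s.toFinset.filter (fun e => e.IsDiag), s.count e with hA
  set B := ∑ e ∈ s.toFinset.filter (fun e => ¬ e.IsDiag), s.count e with hB
  have hAB : A + B = m := by
    rw [hA, hB, Finset.sum_filter_add_sum_filter_not, Multiset.toFinset_sum_count_eq, hcard]
  set F : ℝ := ∏ e ∈ s.toFinset, ((s.count e).factorial : ℝ) with hF
  have hFne : F ≠ 0 :=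
    Finset.prod_ne_zero_iff.2 fun e _ => Nat.cast_ne_zero.2 (Nat.factorial_ne_zero _)
  have hmapprod : (s.map a).prod = 2 ^ B * ∏ e ∈ s.toFinset, R (c e.inf) (c e.sup) ^ s.count e := by
    rw [Finset.prod_multiset_map_count]
    have : ∀ e ∈ s.toFinset, a e ^ s.count e
        = (if e.IsDiag then (1:ℝ) else 2) ^ s.count e * R (c e.inf) (c e.sup) ^ s.count e :=
      fun e _ => mul_pow _ _ _
    rw [Finset.prod_congr rfl this, Finset.prod_mul_distrib]
    congr 1
    rw [← Finset.prod_filter_mul_prod_filter_not s.toFinset (fun e => e.IsDiag)]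
    have h1 : ∏ e ∈ s.toFinset.filter (fun e => e.IsDiag),
        (if e.IsDiag then (1:ℝ) else 2) ^ s.count e = 1 := by
      refine Finset.prod_eq_one fun e he => ?_
      rw [if_pos (Finset.mem_filter.1 he).2, one_pow]
    have h2 : ∏ e ∈ s.toFinset.filter (fun e => ¬ e.IsDiag),
        (if e.IsDiag then (1:ℝ) else 2) ^ s.count e = 2 ^ B := by
      rw [← Finset.prod_pow_eq_pow_sum]
      exact Finset.prod_congr rfl fun e he => by rw [if_neg (Finset.mem_filter.1 he).2]
    rw [h1, h2, one_mul]
  have hkappa : ((kappa s : ℚ) : ℝ) = ((2:ℝ) ^ A)⁻¹ * F⁻¹ := by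
    rw [kappa]
    push_cast
    congr 1
    · rw [hA, ← diag_count, ← Finset.prod_pow_eq_pow_sum (M := ℝ)]
      exact Finset.prod_inv_distrib _
    · rw [hF]
      exact Finset.prod_inv_distrib _
  have hmn : F * (s.countPerms : ℝ) = (m.factorial : ℝ) := by
    rw [hF, ← Nat.cast_prod, ← Nat.cast_mul, multiset_multinomial_spec, hcard]
  have hmultne : (s.countPerms : ℝ) ≠ 0 := by
    intro h
    rw [h, mul_zero] at hmn
    exact Nat.cast_ne_zero.2 (Nat.factorial_ne_zero m) hmn.symm
  rw [hmapprod, hkappa, ← hmn, ← hAB, pow_add]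
  have h2A : ((2:ℝ) ^ A) ≠ 0 := pow_ne_zero _ two_ne_zero
  have h2B : ((2:ℝ) ^ B) ≠ 0 := pow_ne_zero _ two_ne_zero
  field_simp

lemma double_sum (q n : ℕ) (R : Matrix (Fin q) (Fin q) ℝ) (c : Fin n → Fin q) :
    ∑ u : Fin n, ∑ v : Fin n, R (c u) (c v)
      = ∑ i : Fin q, ∑ j : Fin q,
          (((Finset.univ.filter fun u => c u = i).card : ℝ)) * R i j *
            ((Finset.univ.filter fun u => c u = j).card : ℝ) := by
  classical
  have inner : ∀ i : Fin q, ∑ v : Fin n, R i (c v)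
      = ∑ j : Fin q, ((Finset.univ.filter fun u => c u = j).card : ℝ) * R i j := by
    intro i
    rw [← Finset.sum_fiberwise_of_maps_to (fun v _ => Finset.mem_univ (c v))
      (fun v => R i (c v))]
    refine Finset.sum_congr rfl fun j _ => ?_
    rw [Finset.sum_congr rfl (fun v hv => by rw [(Finset.mem_filter.1 hv).2]),
      Finset.sum_const, nsmul_eq_mul]
  calc ∑ u : Fin n, ∑ v : Fin n, R (c u) (c v)
      = ∑ i : Fin q, ∑ u ∈ Finset.univ.filter (fun u => c u = i),
          ∑ v : Fin n, R (c u) (c v) :=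
        (Finset.sum_fiberwise_of_maps_to (fun u _ => Finset.mem_univ (c u)) _).symm
    _ = ∑ i : Fin q, ((Finset.univ.filter fun u => c u = i).card : ℝ) *
          ∑ j : Fin q, ((Finset.univ.filter fun u => c u = j).card : ℝ) * R i j := by
        refine Finset.sum_congr rfl fun i _ => ?_
        rw [Finset.sum_congr rfl (fun u hu => by rw [(Finset.mem_filter.1 hu).2, inner i]),
          Finset.sum_const, nsmul_eq_mul]
    _ = _ := by
        refine Finset.sum_congr rfl fun i _ => ?_
        rw [Finset.mul_sum]
        exact Finset.sum_congr rfl fun j _ => by ring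


/-- direct expression for `g_{R,1}(n, m)` as a sum over the
possible color-class sizes. -/
theorem g_sigma_one_eq (q : ℕ) (R : Matrix (Fin q) (Fin q) ℝ)
    (hsymm : R.IsSymm) (hpos : ∀ i j, 0 ≤ R i j) (n m : ℕ) :
    g R 1 n m =
      1 / (2 ^ m * (m.factorial : ℝ)) *
        ∑ v ∈ Finset.Nat.antidiagonalTuple q n,
          ((n.factorial : ℝ) / ∏ i, ((v i).factorial : ℝ)) *
            (∑ i, ∑ j, (v i : ℝ) * R i j * (v j)) ^ m := by
  classical
  set N : (Fin n → Fin q) → (Fin q → ℕ) :=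
    fun c i => (Finset.univ.filter fun u => c u = i).card with hN
  have step1 : g R 1 n m = ∑ c : Fin n → Fin q,
      ((2:ℝ) ^ m * m.factorial)⁻¹ *
        (∑ i : Fin q, ∑ j : Fin q, (N c i : ℝ) * R i j * (N c j : ℝ)) ^ m := by
    rw [g, Finset.sum_comm]
    refine Finset.sum_congr rfl fun c _ => ?_
    have : ∀ E : Sym (Sym2 (Fin n)) m, weight R 1 E.1 c
        = ((kappa E.1 : ℚ) : ℝ) * ∏ e ∈ E.1.toFinset, R (c e.inf) (c e.sup) ^ E.1.count e := by
      intro E; rw [weight, one_pow, mul_one]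
    rw [Finset.sum_congr rfl fun E _ => this E, sum_sym q n m R c,
      sum_pairs q n R hsymm c, double_sum q n R c]
  rw [step1]
  have hmaps : ∀ c : Fin n → Fin q, c ∈ (univ : Finset (Fin n → Fin q)) →
      N c ∈ Finset.Nat.antidiagonalTuple q n := by
    intro c _
    rw [Finset.Nat.mem_antidiagonalTuple]
    have := Finset.card_eq_sum_card_fiberwise (fun u (_ : u ∈ (univ : Finset (Fin n))) =>
      Finset.mem_univ (c u))
    rw [Finset.card_univ, Fintype.card_fin] at this
    exact this.symm
  rw [← Finset.sum_fiberwise_of_maps_to hmaps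
    (fun c => ((2:ℝ) ^ m * m.factorial)⁻¹ *
      (∑ i : Fin q, ∑ j : Fin q, (N c i : ℝ) * R i j * (N c j : ℝ)) ^ m)]
  rw [Finset.mul_sum]
  refine Finset.sum_congr rfl fun v hv => ?_
  have hv' : ∑ i, v i = n := Finset.Nat.mem_antidiagonalTuple.1 hv
  have hcc := card_colorings q n v hv'
  have hfib : ∑ c ∈ Finset.univ.filter (fun c : Fin n → Fin q => N c = v),
      ((2:ℝ) ^ m * m.factorial)⁻¹ *
        (∑ i : Fin q, ∑ j : Fin q, (N c i : ℝ) * R i j * (N c j : ℝ)) ^ m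
      = (Nat.multinomial Finset.univ v : ℝ) *
        (((2:ℝ) ^ m * m.factorial)⁻¹ *
          (∑ i : Fin q, ∑ j : Fin q, (v i : ℝ) * R i j * (v j : ℝ)) ^ m) := by
    rw [Finset.sum_congr rfl (fun c hc => by
      rw [(Finset.mem_filter.1 hc).2]), Finset.sum_const, nsmul_eq_mul, hcc]
  rw [hfib]
  have hprodne : (∏ i, ((v i).factorial : ℝ)) ≠ 0 :=
    Finset.prod_ne_zero_iff.2 fun i _ => Nat.cast_ne_zero.2 (Nat.factorial_ne_zero _)
  have hmult : (Nat.multinomial Finset.univ v : ℝ)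
      = (n.factorial : ℝ) / ∏ i, ((v i).factorial : ℝ) := by
    rw [eq_div_iff hprodne, mul_comm, ← Nat.cast_prod, ← Nat.cast_mul,
      Nat.multinomial_spec, hv']
  rw [hmult]
  ring


end

end Inhomog
end
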